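/- For every scenery ξ : ℤ → {0,1} with ξ(0) = φ(0), there exists a unique nearest-neighbor walk R : ℤ → ℤ such that R(0) = 0 and φ(R(k)) = ξ(k) for all k ∈ ℤ. -/

import Mathlib

def stepF (φ : ℤ → Bool) (x : ℤ) (c : Bool) : ℤ :=
  if φ (x + 1) = c then x + 1 else x - 1

def walkF (φ ξ : ℤ → Bool) : ℕ → ℤ
  | 0 => 0
  | n + 1 => stepF φ (walkF φ ξ n) (ξ ((n : ℤ) + 1))

def walkB (φ ξ : ℤ → Bool) : ℕ → ℤ
  | 0 => 0
  | n + 1 => stepF φ (walkB φ ξ n) (ξ (-((n : ℤ) + 1)))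

def walk (φ ξ : ℤ → Bool) : ℤ → ℤ
  | Int.ofNat n => walkF φ ξ n
  | Int.negSucc n => walkB φ ξ (n + 1)

lemma stepF_spec {φ : ℤ → Bool} (key : ∀ y, φ (y + 2) = !φ y) (x : ℤ) (c : Bool) :
    φ (stepF φ x c) = c ∧ |stepF φ x c - x| = 1 := by
  unfold stepF
  by_cases h : φ (x + 1) = c
  · rw [if_pos h]
    exact ⟨h, by rw [show x + 1 - x = 1 by ring]; norm_num⟩
  · have k := key (x - 1)
    rw [show x - 1 + 2 = x + 1 by ring] at k
    have hc : φ (x - 1) = c := by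
      cases c <;> cases hb : φ (x + 1) <;> simp_all
    rw [if_neg h]
    exact ⟨hc, by rw [show x - 1 - x = -1 by ring]; norm_num⟩

lemma stepF_unique {φ : ℤ → Bool} (key : ∀ y, φ (y + 2) = !φ y) {x z : ℤ} {c : Bool}
    (h1 : |z - x| = 1) (h2 : φ z = c) : z = stepF φ x c := by
  have hz : z = x + 1 ∨ z = x - 1 := by
    rcases abs_eq (by norm_num : (0:ℤ) ≤ 1) |>.mp h1 with h | h
    · left; omega
    · right; omega
  unfold stepF
  rcases hz with rfl | rfl
  · rw [if_pos h2]
  · have k := key (x - 1)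
    rw [show x - 1 + 2 = x + 1 by ring] at k
    have hne : ¬ (φ (x + 1) = c) := by
      rw [k, h2]; cases c <;> simp
    rw [if_neg hne]

lemma walk_coe (φ ξ : ℤ → Bool) (n : ℕ) : walk φ ξ (n : ℤ) = walkF φ ξ n := rfl

lemma walk_negCoe (φ ξ : ℤ → Bool) (n : ℕ) : walk φ ξ (-(n : ℤ)) = walkB φ ξ n := by
  cases n with
  | zero => rfl
  | succ m =>
    have h : -((m + 1 : ℕ) : ℤ) = Int.negSucc m := by
      rw [Int.negSucc_eq]; push_cast; ring
    rw [h]; rfl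

lemma walk_succ (φ ξ : ℤ → Bool) (n : ℕ) :
    walk φ ξ ((n : ℤ) + 1) = stepF φ (walk φ ξ (n : ℤ)) (ξ ((n : ℤ) + 1)) := by
  have h : ((n : ℤ) + 1) = ((n + 1 : ℕ) : ℤ) := by push_cast; ring
  rw [walk_coe, h, walk_coe]
  show stepF φ (walkF φ ξ n) (ξ ((n : ℤ) + 1)) = _
  rw [h]

lemma walk_negSucc (φ ξ : ℤ → Bool) (n : ℕ) :
    walk φ ξ (-((n : ℤ) + 1)) = stepF φ (walk φ ξ (-(n : ℤ))) (ξ (-((n : ℤ) + 1))) := by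
  have h : ((n : ℤ) + 1) = ((n + 1 : ℕ) : ℤ) := by push_cast; ring
  rw [walk_negCoe, h, walk_negCoe]
  show stepF φ (walkB φ ξ n) (ξ (-((n : ℤ) + 1))) = _
  rw [h]

/-- For every scenery `ξ` with `ξ 0 = φ 0`, there is a unique nearest-neighbor walk
`R : ℤ → ℤ` with `R 0 = 0` generating `ξ` on the 4-periodic scenery `φ`. -/
theorem exists_unique_representation
    (φ : ℤ → Bool)
    (hper : ∀ k : ℤ, φ (k + 4) = φ k)
    (hφ : (φ 0 = false ∧ φ 1 = false ∧ φ 2 = true ∧ φ 3 = true) ∨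
          (φ 0 = true ∧ φ 1 = true ∧ φ 2 = false ∧ φ 3 = false))
    (ξ : ℤ → Bool) (h0 : ξ 0 = φ 0) :
    ∃! R : ℤ → ℤ, R 0 = 0 ∧ (∀ t : ℤ, |R (t + 1) - R t| = 1) ∧ ∀ k : ℤ, φ (R k) = ξ k := by
  -- 4n-periodicity
  have hmul : ∀ (n : ℤ) (k : ℤ), φ (k + 4 * n) = φ k := by
    intro n
    induction n using Int.induction_on with
    | zero => simp
    | succ n ih =>
      intro k
      rw [show k + 4 * ((n : ℤ) + 1) = (k + 4 * n) + 4 by ring, hper, ih]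
    | pred n ih =>
      intro k
      have h := hper (k + 4 * (-(n : ℤ) - 1))
      rw [show (k + 4 * (-(n : ℤ) - 1)) + 4 = k + 4 * (-(n : ℤ)) by ring] at h
      rw [← h]
      exact ih k
  have hmod : ∀ y : ℤ, φ y = φ (y % 4) := by
    intro y
    conv_lhs => rw [← Int.emod_add_mul_ediv y 4]
    exact hmul _ _
  have key : ∀ y : ℤ, φ (y + 2) = !φ y := by
    intro y
    have h1 := hmod y
    have h2 := hmod (y + 2)
    have hr : y % 4 = 0 ∨ y % 4 = 1 ∨ y % 4 = 2 ∨ y % 4 = 3 := by omega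
    rcases hr with h | h | h | h <;>
      [ (have h3 : (y + 2) % 4 = 2 := by omega);
        (have h3 : (y + 2) % 4 = 3 := by omega);
        (have h3 : (y + 2) % 4 = 0 := by omega);
        (have h3 : (y + 2) % 4 = 1 := by omega)] <;>
      rw [h1, h2, h, h3] <;>
      rcases hφ with ⟨a, b, c, d⟩ | ⟨a, b, c, d⟩ <;> simp [a, b, c, d]
  -- existence properties
  have hFφ : ∀ n : ℕ, φ (walk φ ξ (n : ℤ)) = ξ (n : ℤ) := by
    intro n
    induction n with
    | zero => simpa [walk_coe, walkF, show walk φ ξ 0 = 0 from rfl] using h0.symm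
    | succ n ih =>
      rw [show ((n + 1 : ℕ) : ℤ) = (n : ℤ) + 1 by push_cast; ring, walk_succ]
      exact (stepF_spec key _ _).1
  have hBφ : ∀ n : ℕ, φ (walk φ ξ (-(n : ℤ))) = ξ (-(n : ℤ)) := by
    intro n
    induction n with
    | zero => simpa [walk_coe, walkF, show walk φ ξ 0 = 0 from rfl] using h0.symm
    | succ n ih =>
      rw [show ((n + 1 : ℕ) : ℤ) = (n : ℤ) + 1 by push_cast; ring, walk_negSucc]
      exact (stepF_spec key _ _).1
  have hcases : ∀ k : ℤ, (∃ n : ℕ, k = (n : ℤ)) ∨ (∃ n : ℕ, k = -((n : ℤ) + 1)) := by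
    intro k
    rcases le_or_gt 0 k with h | h
    · exact Or.inl ⟨k.toNat, (Int.toNat_of_nonneg h).symm⟩
    · refine Or.inr ⟨(-k - 1).toNat, ?_⟩
      have := Int.toNat_of_nonneg (by omega : (0:ℤ) ≤ -k - 1)
      omega
  refine ⟨walk φ ξ, ⟨rfl, ?_, ?_⟩, ?_⟩
  · -- nearest neighbor
    intro t
    rcases hcases t with ⟨n, rfl⟩ | ⟨n, rfl⟩
    · rw [walk_succ]
      exact (stepF_spec key _ _).2
    · rw [show -((n : ℤ) + 1) + 1 = -(n : ℤ) by ring, walk_negSucc, abs_sub_comm]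
      exact (stepF_spec key _ _).2
  · -- generates ξ
    intro k
    rcases hcases k with ⟨n, rfl⟩ | ⟨n, rfl⟩
    · exact hFφ n
    · have h : -((n : ℤ) + 1) = -(((n + 1 : ℕ)) : ℤ) := by push_cast; ring
      rw [h]; exact hBφ (n + 1)
  · -- uniqueness
    rintro R ⟨hR0, hR1, hR2⟩
    have hF : ∀ n : ℕ, R (n : ℤ) = walk φ ξ (n : ℤ) := by
      intro n
      induction n with
      | zero => simpa [walk_coe, walkF, show walk φ ξ 0 = 0 from rfl] using hR0
      | succ n ih =>
        have h := stepF_unique key (hR1 (n : ℤ)) (hR2 ((n : ℤ) + 1))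
        rw [show ((n + 1 : ℕ) : ℤ) = (n : ℤ) + 1 by push_cast; ring, h, ih, ← walk_succ]
    have hB : ∀ n : ℕ, R (-(n : ℤ)) = walk φ ξ (-(n : ℤ)) := by
      intro n
      induction n with
      | zero => simpa [walk_coe, walkF, show walk φ ξ 0 = 0 from rfl] using hR0
      | succ n ih =>
        have he := hR1 (-((n : ℤ) + 1))
        rw [show -((n : ℤ) + 1) + 1 = -(n : ℤ) by ring, abs_sub_comm] at he
        have h := stepF_unique key he (hR2 (-((n : ℤ) + 1)))
        rw [show ((n + 1 : ℕ) : ℤ) = (n : ℤ) + 1 by push_cast; ring, h, ih, ← walk_negSucc]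
    funext k
    rcases hcases k with ⟨n, rfl⟩ | ⟨n, rfl⟩
    · exact hF n
    · have h : -((n : ℤ) + 1) = -(((n + 1 : ℕ)) : ℤ) := by push_cast; ring
      rw [h]; exact hB (n + 1)
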